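/- (Reoptimization by elementary exchange steps) Let f : 2^E → ℕ be an integral polymatroid rank function and let every C_e : ℕ×ℕ → ℝ≥0 be regular. Let t, t' ∈ ℕ^E and d, d' ∈ ℕ with B_f(d) ≠ ∅ ≠ B_f(d'). Then for every optimal solution x of P(t,d) there exist k ≤ ‖t − t'‖ + |d − d'| and a sequence x = x⁰, x¹, …, x^k such that x^k is an optimal solution of P(t',d'), and for every l < k either x^{l+1} = x^l − χ_e + χ_g for some distinct e, g ∈ E, or x^{l+1} = x^l + χ_e for some e ∈ E, or x^{l+1} = x^l − χ_e for some e ∈ E, or x^{l+1} = x^l. -/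

import Mathlib

open Finset

/-- Indicator vector of an element. -/
def chi {E : Type*} [DecidableEq E] (e : E) : E → ℕ := fun e' => if e' = e then 1 else 0

/-- Integral polymatroid rank function: normalized, monotone, submodular. -/
def IsPolymatroidRank {E : Type*} [Fintype E] [DecidableEq E] (f : Finset E → ℕ) : Prop :=
  f ∅ = 0 ∧ (∀ U V : Finset E, U ⊆ V → f U ≤ f V) ∧
    (∀ U V : Finset E, f (U ∪ V) + f (U ∩ V) ≤ f U + f V)

/-- The integral polymatroid base polytope `B_f(d)`. -/
def Base {E : Type*} [Fintype E] (f : Finset E → ℕ) (d : ℕ) : Set (E → ℕ) :=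
  {x | (∀ U : Finset E, ∑ e ∈ U, x e ≤ f U) ∧ ∑ e, x e = d}

/-- Regularity of a parametrized cost function: the left discrete derivative
`C⁻(x;t) = C(x;t) - C(x-1;t)` (for `x ≥ 1`) satisfies both
`C⁻(x;t) ≤ C⁻(x;t+1)` and `C⁻(x;t+1) ≤ C⁻(x+1;t)`. -/
def Regular (C : ℕ → ℕ → ℝ) : Prop :=
  ∀ x t : ℕ, 1 ≤ x →
    C x t - C (x - 1) t ≤ C x (t + 1) - C (x - 1) (t + 1) ∧
    C x (t + 1) - C (x - 1) (t + 1) ≤ C (x + 1) t - C x t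

/-- The objective `Σ_{e ∈ E} C_e(x_e; t_e)` of problem `P(t,d)`. -/
def totalCost {E : Type*} [Fintype E] (C : E → ℕ → ℕ → ℝ) (t : E → ℕ) (x : E → ℕ) : ℝ :=
  ∑ e, C e (x e) (t e)

/-- An optimal solution of `P(t,d)`: minimize `Σ_e C_e(x_e;t_e)` over `B_f(d)`. -/
def IsOptimal {E : Type*} [Fintype E] (f : Finset E → ℕ) (C : E → ℕ → ℕ → ℝ)
    (t : E → ℕ) (d : ℕ) (x : E → ℕ) : Prop :=
  x ∈ Base f d ∧ ∀ y ∈ Base f d, totalCost C t x ≤ totalCost C t y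

/-- The `L1`-distance `‖u - v‖ = Σ_e |u_e - v_e|` of two vectors in `ℕ^E`. -/
def l1 {E : Type*} [Fintype E] (u v : E → ℕ) : ℕ :=
  ∑ e, ((u e : ℤ) - (v e : ℤ)).natAbs

section Aux
variable {E : Type*} [Fintype E] [DecidableEq E]

/-- Feasibility for the polymatroid. -/
def Feas (f : Finset E → ℕ) (x : E → ℕ) : Prop := ∀ U : Finset E, ∑ e ∈ U, x e ≤ f U

/-- subtract one unit at `e`, add one unit at `g`. -/
def exch (y : E → ℕ) (e g : E) : E → ℕ :=
  fun v => if v = e then y v - 1 else if v = g then y v + 1 else y v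

def addOne (y : E → ℕ) (g : E) : E → ℕ := fun v => if v = g then y v + 1 else y v
def subOne (y : E → ℕ) (e : E) : E → ℕ := fun v => if v = e then y v - 1 else y v

lemma exch_eq_chi {y : E → ℕ} {e g : E} (hne : e ≠ g) (hy : 1 ≤ y e) :
    exch y e g = y - chi e + chi g := by
  funext v
  simp only [exch, Pi.add_apply, Pi.sub_apply, chi]
  by_cases hve : v = e
  · simp [hve, hne, Ne.symm hne]
  · by_cases hvg : v = g
    · simp [hve, hvg, hne, Ne.symm hne]
    · simp [hve, hvg]

lemma addOne_eq_chi (y : E → ℕ) (g : E) : addOne y g = y + chi g := by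
  funext v; simp only [addOne, Pi.add_apply, chi]
  by_cases hvg : v = g <;> simp [hvg]

lemma subOne_eq_chi (y : E → ℕ) (e : E) : subOne y e = y - chi e := by
  funext v; simp only [subOne, Pi.sub_apply, chi]
  by_cases hve : v = e <;> simp [hve]

lemma sum_addOne (y : E → ℕ) (g : E) (V : Finset E) :
    ∑ v ∈ V, addOne y g v = ∑ v ∈ V, y v + (if g ∈ V then 1 else 0) := by
  classical
  induction V using Finset.induction_on with
  | empty => simp
  | insert _ _ ha =>
    rename_i a V ih
    rw [Finset.sum_insert ha, Finset.sum_insert ha, ih]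
    simp only [addOne, Finset.mem_insert]
    by_cases hag : a = g
    · subst hag; simp [ha]; ring
    · have : ¬ (g = a) := fun h => hag h.symm
      simp only [if_neg hag, this, false_or]
      ring

lemma sum_subOne {y : E → ℕ} {e : E} (hy : 1 ≤ y e) (V : Finset E) :
    ∑ v ∈ V, subOne y e v + (if e ∈ V then 1 else 0) = ∑ v ∈ V, y v := by
  classical
  induction V using Finset.induction_on with
  | empty => simp
  | insert _ _ ha =>
    rename_i a V ih
    rw [Finset.sum_insert ha, Finset.sum_insert ha]
    by_cases hae : a = e
    · subst hae
      have heV : a ∉ V := ha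
      rw [if_pos (Finset.mem_insert_self a V)]
      have h2 : ∑ v ∈ V, subOne y a v = ∑ v ∈ V, y v := by
        apply Finset.sum_congr rfl
        intro v hv
        simp only [subOne]
        rw [if_neg]; intro h; exact heV (h ▸ hv)
      have h4 : subOne y a a = y a - 1 := by simp [subOne]
      rw [h2, h4]
      omega
    · have h5 : (if e ∈ insert a V then 1 else 0) = (if e ∈ V then (1:ℕ) else 0) := by
        by_cases heV : e ∈ V
        · rw [if_pos (Finset.mem_insert_of_mem heV), if_pos heV]
        · have h6 : e ∉ insert a V := fun h =>
            (Finset.mem_insert.1 h).elim (fun h' => hae h'.symm) heV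
          rw [if_neg h6, if_neg heV]
      have h4 : subOne y e a = y a := by simp [subOne, hae]
      rw [h5, h4]
      omega

lemma exch_eq_comp {y : E → ℕ} {e g : E} (hne : e ≠ g) :
    exch y e g = addOne (subOne y e) g := by
  funext v
  simp only [exch, addOne, subOne]
  by_cases hve : v = e
  · have hvg : ¬ v = g := fun h => hne (hve.symm.trans h)
    simp [hve, hvg, hne, Ne.symm hne]
  · by_cases hvg : v = g <;> simp [hve, hvg, hne, Ne.symm hne]

lemma sum_exch {y : E → ℕ} {e g : E} (hne : e ≠ g) (hy : 1 ≤ y e) (V : Finset E) :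
    ∑ v ∈ V, exch y e g v + (if e ∈ V then 1 else 0)
      = ∑ v ∈ V, y v + (if g ∈ V then 1 else 0) := by
  rw [exch_eq_comp hne]
  have h1 := sum_addOne (subOne y e) g V
  have h2 := sum_subOne hy V
  omega

lemma feas_mono {f : Finset E → ℕ} {x y : E → ℕ} (hx : Feas f x) (h : ∀ e, y e ≤ x e) :
    Feas f y := fun U => le_trans (Finset.sum_le_sum fun i _ => h i) (hx U)

/-- Union/intersection of tight sets is tight. -/
lemma tight_closure {f : Finset E → ℕ} (hf : IsPolymatroidRank f) {x : E → ℕ}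
    (hx : Feas f x) {A B : Finset E}
    (hA : ∑ v ∈ A, x v = f A) (hB : ∑ v ∈ B, x v = f B) :
    (∑ v ∈ A ∪ B, x v = f (A ∪ B)) ∧ (∑ v ∈ A ∩ B, x v = f (A ∩ B)) := by
  have h1 := hf.2.2 A B
  have h2 := hx (A ∪ B)
  have h3 := hx (A ∩ B)
  have h4 : ∑ v ∈ A ∪ B, x v + ∑ v ∈ A ∩ B, x v = ∑ v ∈ A, x v + ∑ v ∈ B, x v :=
    Finset.sum_union_inter
  constructor <;> omega

/-- A minimal tight set containing `e`, when some tight set contains `e`. -/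
lemma exists_min_tight {f : Finset E → ℕ} (hf : IsPolymatroidRank f) {x : E → ℕ}
    (hx : Feas f x) {e : E} {S0 : Finset E} (he : e ∈ S0) (hS0 : ∑ v ∈ S0, x v = f S0) :
    ∃ S : Finset E, e ∈ S ∧ (∑ v ∈ S, x v = f S) ∧
      ∀ U : Finset E, e ∈ U → (∑ v ∈ U, x v = f U) → S ⊆ U := by
  classical
  set T : Finset (Finset E) :=
    Finset.univ.filter (fun U => e ∈ U ∧ ∑ v ∈ U, x v = f U) with hT
  have hS0T : S0 ∈ T := by simp [hT, he, hS0]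
  obtain ⟨S, hST, hSmin⟩ := Finset.exists_min_image T Finset.card ⟨S0, hS0T⟩
  simp only [hT, Finset.mem_filter, Finset.mem_univ, true_and] at hST
  refine ⟨S, hST.1, hST.2, fun U heU hUt => ?_⟩
  have hinter : S ∩ U ∈ T := by
    simp only [hT, Finset.mem_filter, Finset.mem_univ, true_and]
    exact ⟨Finset.mem_inter.2 ⟨hST.1, heU⟩, (tight_closure hf hx hST.2 hUt).2⟩
  have hcard := hSmin _ hinter
  have : S ∩ U = S := Finset.eq_of_subset_of_card_le Finset.inter_subset_left hcard
  calc S = S ∩ U := this.symm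
  _ ⊆ U := Finset.inter_subset_right

/-- The union of all tight sets avoiding `e`. -/
lemma tight_sup {f : Finset E → ℕ} (hf : IsPolymatroidRank f) {x : E → ℕ}
    (hx : Feas f x) (e : E) :
    ∃ U : Finset E, (∑ v ∈ U, x v = f U) ∧ e ∉ U ∧
      ∀ V : Finset E, (∑ v ∈ V, x v = f V) → e ∉ V → V ⊆ U := by
  classical
  refine ⟨(Finset.univ.filter (fun V => (∑ v ∈ V, x v = f V) ∧ e ∉ V)).sup id, ?_, ?_, ?_⟩
  · apply Finset.sup_induction (p := fun W : Finset E => ∑ v ∈ W, x v = f W)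
    · simpa using hf.1.symm
    · intro A hA B hB
      simpa [Finset.sup_eq_union] using (tight_closure hf hx hA hB).1
    · intro V hV
      exact (Finset.mem_filter.1 hV).2.1
  · intro hmem
    rw [Finset.mem_sup] at hmem
    obtain ⟨V, hV, heV⟩ := hmem
    exact (Finset.mem_filter.1 hV).2.2 heV
  · intro V h1 h2
    have hmem : V ∈ Finset.univ.filter (fun V => (∑ v ∈ V, x v = f V) ∧ e ∉ V) :=
      Finset.mem_filter.2 ⟨Finset.mem_univ _, h1, h2⟩
    exact Finset.le_sup (f := id) hmem

/-- Simultaneous exchange lemma for integral polymatroids. -/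
lemma MEX {f : Finset E → ℕ} (hf : IsPolymatroidRank f) {x y : E → ℕ}
    (hx : Feas f x) (hy : Feas f y) {e : E} (he : y e < x e) :
    (∃ g, g ≠ e ∧ x g < y g ∧ Feas f (exch y g e) ∧ Feas f (exch x e g))
    ∨ ((∑ v, y v) < ∑ v, x v ∧ Feas f (addOne y e)) := by
  classical
  obtain ⟨U, hUt, heU, hUmax⟩ := tight_sup hf hx e
  have hxe1 : 1 ≤ x e := by omega
  have hw : ∀ g : E, g ≠ e → g ∉ U → Feas f (exch x e g) := by
    intro g hge hgU V
    have hne : e ≠ g := fun h => hge h.symm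
    have hs := sum_exch hne hxe1 V
    by_cases hgV : g ∈ V
    · by_cases heV : e ∈ V
      · simp only [hgV, heV, if_true] at hs
        have := hx V; omega
      · have hnt : ∑ v ∈ V, x v ≠ f V := fun ht => hgU ((hUmax V ht heV) hgV)
        have := hx V
        simp only [hgV, heV, if_true, if_false] at hs
        omega
    · by_cases heV : e ∈ V <;> simp only [hgV, heV, if_true, if_false] at hs <;>
        have := hx V <;> omega
  have hzgen : ∀ g : E, g ≠ e → 1 ≤ y g →
      (∀ V : Finset E, (∑ v ∈ V, y v = f V) → e ∈ V → g ∈ V) → Feas f (exch y g e) := by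
    intro g hge hyg hprop V
    have hs := sum_exch hge hyg V
    by_cases heV : e ∈ V
    · by_cases hgV : g ∈ V
      · simp only [heV, hgV, if_true] at hs
        have := hy V; omega
      · have hnt : ∑ v ∈ V, y v ≠ f V := fun ht => hgV (hprop V ht heV)
        have := hy V
        simp only [heV, hgV, if_true, if_false] at hs
        omega
    · by_cases hgV : g ∈ V <;> simp only [heV, hgV, if_true, if_false] at hs <;>
        have := hy V <;> omega
  by_cases hS : ∃ S : Finset E, e ∈ S ∧ ∑ v ∈ S, y v = f S
  · obtain ⟨S0, heS0, hS0⟩ := hS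
    obtain ⟨S, heS, hSt, hSmin⟩ := exists_min_tight hf hy heS0 hS0
    have hclaim : ∃ g, g ∈ S ∧ g ≠ e ∧ x g < y g ∧ g ∉ U := by
      by_contra hcon
      push_neg at hcon
      have hsub := hf.2.2 S U
      have h1 := hx (S ∪ U)
      have h2 := hy (S ∩ U)
      have hsplit1 : ∑ v ∈ S \ U, x v + ∑ v ∈ U, x v = ∑ v ∈ S ∪ U, x v := by
        rw [← Finset.union_sdiff_right]
        exact Finset.sum_sdiff Finset.subset_union_right
      have hsplit2 : ∑ v ∈ S \ U, y v + ∑ v ∈ S ∩ U, y v = ∑ v ∈ S, y v := by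
        have h := Finset.sum_sdiff (f := y) (Finset.inter_subset_left : S ∩ U ⊆ S)
        rwa [Finset.sdiff_inter_self_left] at h
      have hstrict : ∑ v ∈ S \ U, y v < ∑ v ∈ S \ U, x v := by
        apply Finset.sum_lt_sum
        · intro i hi
          rcases eq_or_ne i e with rfl | hie
          · exact le_of_lt he
          · by_contra hlt
            push_neg at hlt
            exact (Finset.mem_sdiff.1 hi).2 (hcon i (Finset.mem_sdiff.1 hi).1 hie hlt)
        · exact ⟨e, Finset.mem_sdiff.2 ⟨heS, heU⟩, he⟩
      omega
    obtain ⟨g, hgS, hge, hgxy, hgU⟩ := hclaim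
    refine Or.inl ⟨g, hge, hgxy, ?_, hw g hge hgU⟩
    exact hzgen g hge (by omega) (fun V ht heV => (hSmin V heV ht) hgS)
  · push_neg at hS
    have hzgen' : ∀ g : E, g ≠ e → 1 ≤ y g → Feas f (exch y g e) :=
      fun g hge hyg => hzgen g hge hyg (fun V ht heV => absurd ht (hS V heV))
    by_cases hg2 : ∃ g, g ≠ e ∧ x g < y g ∧ g ∉ U
    · obtain ⟨g, hge, hgxy, hgU⟩ := hg2
      exact Or.inl ⟨g, hge, hgxy, hzgen' g hge (by omega), hw g hge hgU⟩
    · push_neg at hg2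
      refine Or.inr ⟨?_, ?_⟩
      · have hsplit1 : ∑ v ∈ Finset.univ \ U, x v + ∑ v ∈ U, x v = ∑ v, x v :=
          Finset.sum_sdiff (Finset.subset_univ U)
        have hsplit2 : ∑ v ∈ Finset.univ \ U, y v + ∑ v ∈ U, y v = ∑ v, y v :=
          Finset.sum_sdiff (Finset.subset_univ U)
        have h2 : ∑ v ∈ U, y v ≤ f U := hy U
        have hstrict : ∑ v ∈ Finset.univ \ U, y v < ∑ v ∈ Finset.univ \ U, x v := by
          apply Finset.sum_lt_sum
          · intro i hi
            rcases eq_or_ne i e with rfl | hie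
            · exact le_of_lt he
            · by_contra hlt
              push_neg at hlt
              exact (Finset.mem_sdiff.1 hi).2 (hg2 i hie hlt)
          · exact ⟨e, Finset.mem_sdiff.2 ⟨Finset.mem_univ e, heU⟩, he⟩
        omega
      · intro V
        have hs := sum_addOne y e V
        by_cases heV : e ∈ V
        · have hnt : ∑ v ∈ V, y v ≠ f V := hS V heV
          have := hy V
          simp only [heV, if_true] at hs
          omega
        · simp only [heV, if_false] at hs
          have := hy V; omega

end Aux

section Cost
variable {E : Type*} [Fintype E] [DecidableEq E]

lemma reg_up {C : ℕ → ℕ → ℝ} (hC : Regular C) (a τ : ℕ) :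
    C (a+1) τ - C a τ ≤ C (a+1) (τ+1) - C a (τ+1) := by
  have := (hC (a+1) τ (by omega)).1
  simpa using this

lemma reg_cross {C : ℕ → ℕ → ℝ} (hC : Regular C) (a τ : ℕ) :
    C (a+1) (τ+1) - C a (τ+1) ≤ C (a+2) τ - C (a+1) τ := by
  have := (hC (a+1) τ (by omega)).2
  simpa using this

lemma reg_step {C : ℕ → ℕ → ℝ} (hC : Regular C) (a τ : ℕ) :
    C (a+1) τ - C a τ ≤ C (a+2) τ - C (a+1) τ :=
  (reg_up hC a τ).trans (reg_cross hC a τ)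

lemma reg_mono {C : ℕ → ℕ → ℝ} (hC : Regular C) {a b : ℕ} (τ : ℕ) (hab : a ≤ b) :
    C (a+1) τ - C a τ ≤ C (b+1) τ - C b τ := by
  induction b with
  | zero =>
    have : a = 0 := by omega
    subst this; exact le_refl _
  | succ b ih =>
    rcases Nat.lt_or_ge a (b+1) with hlt | hge
    · exact (ih (by omega)).trans (reg_step hC b τ)
    · have : a = b + 1 := by omega
      subst this; exact le_refl _

lemma totalCost_diff {C : E → ℕ → ℕ → ℝ} {t : E → ℕ} {z y : E → ℕ} {e g : E}
    (hne : e ≠ g) (hz : ∀ v, v ≠ e → v ≠ g → z v = y v) :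
    totalCost C t z - totalCost C t y
      = (C e (z e) (t e) - C e (y e) (t e)) + (C g (z g) (t g) - C g (y g) (t g)) := by
  unfold totalCost
  rw [← Finset.sum_sub_distrib]
  rw [← Finset.sum_subset (Finset.subset_univ ({e, g} : Finset E))]
  · rw [Finset.sum_pair hne]
  · intro v _ hv
    simp only [Finset.mem_insert, Finset.mem_singleton, not_or] at hv
    rw [hz v hv.1 hv.2]
    ring

lemma base_finite (f : Finset E → ℕ) (d : ℕ) : (Base f d).Finite := by
  apply Set.Finite.subset (Set.Finite.pi (fun _ : E => Set.finite_Iic d))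
  intro x hx
  simp only [Set.mem_pi, Set.mem_univ, Set.mem_Iic, forall_true_left]
  intro e
  have := Finset.single_le_sum (f := x) (fun i _ => Nat.zero_le _) (Finset.mem_univ e)
  exact le_of_le_of_eq this hx.2

lemma exists_optimal {f : Finset E → ℕ} {d : ℕ} (C : E → ℕ → ℕ → ℝ) (t : E → ℕ)
    (hB : (Base f d).Nonempty) : ∃ y, IsOptimal f C t d y := by
  obtain ⟨y, hymem, hymin⟩ :=
    Set.exists_min_image (Base f d) (totalCost C t) (base_finite f d) hB
  exact ⟨y, hymem, hymin⟩

lemma exists_optimal_minl1 {f : Finset E → ℕ} {d : ℕ} (C : E → ℕ → ℕ → ℝ) (t : E → ℕ)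
    (hB : (Base f d).Nonempty) (x : E → ℕ) :
    ∃ y, IsOptimal f C t d y ∧ ∀ z, IsOptimal f C t d z → l1 x y ≤ l1 x z := by
  obtain ⟨y0, hy0⟩ := exists_optimal C t hB
  have hOfin : {y | IsOptimal f C t d y}.Finite :=
    (base_finite f d).subset (fun y hy => hy.1)
  obtain ⟨y, hy, hymin⟩ := Set.exists_min_image _ (l1 x) hOfin ⟨y0, hy0⟩
  exact ⟨y, hy, hymin⟩

lemma l1_exch_lt {x y : E → ℕ} {e g : E} (hge : g ≠ e) (he : y e < x e) (hg : x g < y g) :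
    l1 x (exch y g e) < l1 x y := by
  unfold l1
  apply Finset.sum_lt_sum
  · intro i _
    show ((x i:ℤ) - (exch y g e i : ℤ)).natAbs ≤ ((x i:ℤ) - (y i:ℤ)).natAbs
    simp only [exch]
    split_ifs with h1 h2
    · subst h1; omega
    · subst h2; omega
    · omega
  · refine ⟨e, Finset.mem_univ e, ?_⟩
    show ((x e:ℤ) - (exch y g e e : ℤ)).natAbs < ((x e:ℤ) - (y e:ℤ)).natAbs
    have hne : ¬ e = g := fun hh => hge hh.symm
    have hval : exch y g e e = y e + 1 := by simp [exch, hne]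
    rw [hval]
    omega

lemma l1_eq_zero {u v : E → ℕ} (h : l1 u v = 0) : u = v := by
  funext e
  have := (Finset.sum_eq_zero_iff).1 h e (Finset.mem_univ e)
  omega

lemma l1_update {t t' : E → ℕ} {h : E} {a : ℕ}
    (hcloser : ((a:ℤ) - t' h).natAbs + 1 = ((t h : ℤ) - t' h).natAbs) :
    l1 (Function.update t h a) t' + 1 = l1 t t' := by
  unfold l1
  rw [← Finset.add_sum_erase _ _ (Finset.mem_univ h),
     ← Finset.add_sum_erase _ _ (Finset.mem_univ h)]
  have hcongr : ∑ e ∈ Finset.univ.erase h, ((Function.update t h a e : ℤ) - t' e).natAbs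
      = ∑ e ∈ Finset.univ.erase h, ((t e : ℤ) - t' e).natAbs := by
    apply Finset.sum_congr rfl
    intro v hv
    rw [Function.update_of_ne (Finset.ne_of_mem_erase hv)]
  rw [hcongr, Function.update_self]
  omega

lemma sum_eq_of_le {x y : E → ℕ} (hle : ∀ e, x e ≤ y e) (hsum : ∑ v, y v = ∑ v, x v) :
    y = x := by
  funext v
  exact ((Finset.sum_eq_sum_iff_of_le (fun i _ => hle i)).1 hsum.symm v (Finset.mem_univ v)).symm

lemma eq_add_chi {x y : E → ℕ} (hle : ∀ e, x e ≤ y e) (hsum : ∑ v, y v = ∑ v, x v + 1) :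
    ∃ g, x g + 1 = y g ∧ y = x + chi g := by
  have hex : ∃ g, x g < y g := by
    by_contra hc
    push_neg at hc
    have heq : ∀ g, y g = x g := fun g => le_antisymm (hc g) (hle g)
    have : ∑ v, y v = ∑ v, x v := Finset.sum_congr rfl (fun v _ => heq v)
    omega
  obtain ⟨g, hg⟩ := hex
  have hsplit1 := Finset.add_sum_erase Finset.univ y (Finset.mem_univ g)
  have hsplit2 := Finset.add_sum_erase Finset.univ x (Finset.mem_univ g)
  have hrest_le : ∑ v ∈ Finset.univ.erase g, x v ≤ ∑ v ∈ Finset.univ.erase g, y v :=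
    Finset.sum_le_sum (fun i _ => hle i)
  have hrest_eq : ∑ v ∈ Finset.univ.erase g, x v = ∑ v ∈ Finset.univ.erase g, y v := by omega
  have hge : y g = x g + 1 := by omega
  have hptw := (Finset.sum_eq_sum_iff_of_le
    (fun i (_ : i ∈ Finset.univ.erase g) => hle i)).1 hrest_eq
  refine ⟨g, hge.symm, funext fun v => ?_⟩
  simp only [Pi.add_apply, chi]
  rcases eq_or_ne v g with rfl | hvg
  · simp [hge]
  · rw [if_neg hvg, add_zero]
    exact (hptw v (Finset.mem_erase.2 ⟨hvg, Finset.mem_univ v⟩)).symm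

lemma eq_sub_chi {x y : E → ℕ} (hle : ∀ e, y e ≤ x e) (hsum : ∑ v, x v = ∑ v, y v + 1) :
    ∃ e, 1 ≤ x e ∧ y = x - chi e := by
  obtain ⟨e, he1, hxe⟩ := eq_add_chi hle hsum
  refine ⟨e, by omega, funext fun v => ?_⟩
  have hv := congrFun hxe v
  simp only [Pi.add_apply, Pi.sub_apply, chi] at *
  by_cases hve : v = e <;> simp [hve] at hv ⊢ <;> omega

lemma eq_exch_chi {x y : E → ℕ} {h : E} (hle : ∀ e, e ≠ h → x e ≤ y e)
    (hh : y h + 1 = x h) (hsum : ∑ v, y v = ∑ v, x v) :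
    ∃ g, g ≠ h ∧ y = x - chi h + chi g := by
  have hx1 : 1 ≤ x h := by omega
  have hle' : ∀ e, subOne x h e ≤ y e := by
    intro e
    simp only [subOne]
    by_cases he : e = h
    · subst he; rw [if_pos rfl]; omega
    · rw [if_neg he]; exact hle e he
  have hsum' : ∑ v, y v = ∑ v, subOne x h v + 1 := by
    have h7 := sum_subOne hx1 Finset.univ
    rw [if_pos (Finset.mem_univ h)] at h7
    omega
  obtain ⟨g, hg1, hgy⟩ := eq_add_chi hle' hsum'
  have hgh : g ≠ h := by
    intro hgh
    rw [hgh] at hg1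
    rw [show subOne x h h = x h - 1 from by simp [subOne]] at hg1
    omega
  refine ⟨g, hgh, ?_⟩
  rw [hgy, subOne_eq_chi]

lemma eq_exch_chi' {x y : E → ℕ} {h : E} (hle : ∀ e, e ≠ h → y e ≤ x e)
    (hh : x h + 1 = y h) (hsum : ∑ v, y v = ∑ v, x v) :
    ∃ e, e ≠ h ∧ 1 ≤ x e ∧ y = x - chi e + chi h := by
  have hy1 : 1 ≤ y h := by omega
  have hle' : ∀ e, subOne y h e ≤ x e := by
    intro e
    simp only [subOne]
    by_cases he : e = h
    · subst he; rw [if_pos rfl]; omega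
    · rw [if_neg he]; exact hle e he
  have hsum' : ∑ v, x v = ∑ v, subOne y h v + 1 := by
    have h7 := sum_subOne hy1 Finset.univ
    rw [if_pos (Finset.mem_univ h)] at h7
    omega
  obtain ⟨e, he1, hey⟩ := eq_add_chi hle' hsum'
  have heh : e ≠ h := by
    intro heh
    rw [heh] at he1
    rw [show subOne y h h = y h - 1 from by simp [subOne]] at he1
    omega
  have hxe : 1 ≤ x e := by
    have h5 : x e = subOne y h e + chi e e := congrFun hey e
    have h6 : chi e e = 1 := by simp [chi]
    rw [h6] at h5
    omega
  refine ⟨e, heh, hxe, funext fun v => ?_⟩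
  have hv : x v = subOne y h v + chi e v := congrFun hey v
  simp only [subOne, chi] at hv
  show y v = x v - (if v = e then 1 else 0) + (if v = h then 1 else 0)
  by_cases hve : v = e
  · subst hve
    have hvh : ¬ v = h := fun hh => heh hh
    rw [if_neg hvh, if_pos rfl] at hv
    rw [if_pos rfl, if_neg hvh]
    omega
  · by_cases hvh : v = h
    · subst hvh
      rw [if_pos rfl, if_neg hve] at hv
      rw [if_neg hve, if_pos rfl]
      omega
    · rw [if_neg hvh, if_neg hve] at hv
      rw [if_neg hve, if_neg hvh]
      omega

end Cost

section Steps
variable {E : Type*} [Fintype E] [DecidableEq E]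
variable {f : Finset E → ℕ} {C : E → ℕ → ℕ → ℝ} {t : E → ℕ}

lemma exch_mem_base {d : ℕ} {y : E → ℕ} (hyB : y ∈ Base f d) {e g : E}
    (hne : e ≠ g) (hye : 1 ≤ y e) (hfeas : Feas f (exch y e g)) :
    exch y e g ∈ Base f d := by
  refine ⟨hfeas, ?_⟩
  have hs := sum_exch hne hye Finset.univ
  rw [if_pos (Finset.mem_univ e), if_pos (Finset.mem_univ g)] at hs
  have h2 := hyB.2
  omega

lemma exch_val_sub {y : E → ℕ} {e g : E} : exch y e g e = y e - 1 := by simp [exch]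

lemma exch_val_add {y : E → ℕ} {e g : E} (hne : e ≠ g) : exch y e g g = y g + 1 := by
  simp [exch, Ne.symm hne]

lemma exch_val_other {y : E → ℕ} {e g v : E} (h1 : v ≠ e) (h2 : v ≠ g) :
    exch y e g v = y v := by simp [exch, h1, h2]

lemma opt_marginal {d : ℕ} {x : E → ℕ} (hx : IsOptimal f C t d x) {e g : E}
    (hne : e ≠ g) (hxe : 1 ≤ x e) (hw : Feas f (exch x e g)) :
    C e (x e) (t e) - C e (x e - 1) (t e) ≤ C g (x g + 1) (t g) - C g (x g) (t g) := by
  have hwB : exch x e g ∈ Base f d := exch_mem_base hx.1 hne hxe hw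
  have hle := hx.2 _ hwB
  have hdiff := totalCost_diff (C := C) (t := t) (z := exch x e g) (y := x) hne
    (fun v hv1 hv2 => exch_val_other hv1 hv2)
  rw [exch_val_sub, exch_val_add hne] at hdiff
  linarith

lemma cost_exch_le {y : E → ℕ} {g e : E} (hne : g ≠ e)
    (hkey : C e (y e + 1) (t e) - C e (y e) (t e) ≤ C g (y g) (t g) - C g (y g - 1) (t g)) :
    totalCost C t (exch y g e) ≤ totalCost C t y := by
  have hdiff := totalCost_diff (C := C) (t := t) (z := exch y g e) (y := y) hne
    (fun v hv1 hv2 => exch_val_other hv1 hv2)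
  rw [exch_val_sub, exch_val_add hne] at hdiff
  linarith

lemma stepD_up (hf : IsPolymatroidRank f) (hreg : ∀ e, Regular (C e)) {d : ℕ} {x : E → ℕ}
    (hx : IsOptimal f C t d x) (hB1 : (Base f (d+1)).Nonempty) :
    ∃ g, IsOptimal f C t (d+1) (x + chi g) := by
  obtain ⟨y, hyopt, hymin⟩ := exists_optimal_minl1 C t hB1 x
  by_cases hge : ∀ e, x e ≤ y e
  · have hsum : ∑ v, y v = ∑ v, x v + 1 := by rw [hyopt.1.2, hx.1.2]
    obtain ⟨g, _, hgy⟩ := eq_add_chi hge hsum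
    exact ⟨g, hgy ▸ hyopt⟩
  · exfalso
    push_neg at hge
    obtain ⟨e, he⟩ := hge
    rcases MEX hf hx.1.1 hyopt.1.1 he with ⟨g, hge', hgxy, hzfeas, hwfeas⟩ | ⟨hlt, _⟩
    · have hne_eg : e ≠ g := fun hh => hge' hh.symm
      have hzB : exch y g e ∈ Base f (d+1) := exch_mem_base hyopt.1 hge' (by omega) hzfeas
      have hmarg := opt_marginal hx hne_eg (by omega) hwfeas
      have h1 : C e (y e + 1) (t e) - C e (y e) (t e)
          ≤ C e (x e) (t e) - C e (x e - 1) (t e) := by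
        have hm := reg_mono (hreg e) (t e) (a := y e) (b := x e - 1) (by omega)
        rwa [show x e - 1 + 1 = x e by omega] at hm
      have h2 : C g (x g + 1) (t g) - C g (x g) (t g)
          ≤ C g (y g) (t g) - C g (y g - 1) (t g) := by
        have hm := reg_mono (hreg g) (t g) (a := x g) (b := y g - 1) (by omega)
        rwa [show y g - 1 + 1 = y g by omega] at hm
      have hcost := cost_exch_le (C := C) (t := t) hge' (by linarith)
      have hzopt : IsOptimal f C t (d+1) (exch y g e) :=
        ⟨hzB, fun w' hw' => hcost.trans (hyopt.2 w' hw')⟩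
      have hmm1 := hymin _ hzopt
      have hmm2 := l1_exch_lt hge' he hgxy
      omega
    · rw [hyopt.1.2, hx.1.2] at hlt
      omega

lemma stepD_down (hf : IsPolymatroidRank f) (hreg : ∀ e, Regular (C e)) {d : ℕ} {x : E → ℕ}
    (hx : IsOptimal f C t d x) (hd : 1 ≤ d) (hB1 : (Base f (d-1)).Nonempty) :
    ∃ e, 1 ≤ x e ∧ IsOptimal f C t (d-1) (x - chi e) := by
  obtain ⟨y, hyopt, hymin⟩ := exists_optimal_minl1 C t hB1 x
  by_cases hge : ∀ e, y e ≤ x e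
  · have hsum : ∑ v, x v = ∑ v, y v + 1 := by
      rw [hx.1.2, hyopt.1.2]; omega
    obtain ⟨e, hxe, hye⟩ := eq_sub_chi hge hsum
    exact ⟨e, hxe, hye ▸ hyopt⟩
  · exfalso
    push_neg at hge
    obtain ⟨g, hg⟩ := hge
    rcases MEX hf hyopt.1.1 hx.1.1 hg with ⟨e, heg, hexy, hwfeas, hzfeas⟩ | ⟨hlt, _⟩
    · have hgne : g ≠ e := fun hh => heg hh.symm
      have hzB : exch y g e ∈ Base f (d-1) := exch_mem_base hyopt.1 hgne (by omega) hzfeas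
      have hmarg := opt_marginal hx heg (by omega) hwfeas
      have h1 : C e (y e + 1) (t e) - C e (y e) (t e)
          ≤ C e (x e) (t e) - C e (x e - 1) (t e) := by
        have hm := reg_mono (hreg e) (t e) (a := y e) (b := x e - 1) (by omega)
        rwa [show x e - 1 + 1 = x e by omega] at hm
      have h2 : C g (x g + 1) (t g) - C g (x g) (t g)
          ≤ C g (y g) (t g) - C g (y g - 1) (t g) := by
        have hm := reg_mono (hreg g) (t g) (a := x g) (b := y g - 1) (by omega)
        rwa [show y g - 1 + 1 = y g by omega] at hm
      have hcost := cost_exch_le (C := C) (t := t) hgne (by linarith)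
      have hzopt : IsOptimal f C t (d-1) (exch y g e) :=
        ⟨hzB, fun w' hw' => hcost.trans (hyopt.2 w' hw')⟩
      have hmm1 := hymin _ hzopt
      have hmm2 := l1_exch_lt hgne hexy hg
      omega
    · rw [hyopt.1.2, hx.1.2] at hlt
      omega

lemma stepT_up (hf : IsPolymatroidRank f) (hreg : ∀ e, Regular (C e)) {d : ℕ} {x : E → ℕ}
    {h : E} (hx : IsOptimal f C t d x) :
    ∃ x', IsOptimal f C (Function.update t h (t h + 1)) d x' ∧
      (x' = x ∨ ∃ g, g ≠ h ∧ x' = x - chi h + chi g) := by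
  set t' := Function.update t h (t h + 1) with ht'
  obtain ⟨y, hyopt, hymin⟩ := exists_optimal_minl1 C t' ⟨x, hx.1⟩ x
  have hsum : ∑ v, y v = ∑ v, x v := by rw [hyopt.1.2, hx.1.2]
  have ht'h : t' h = t h + 1 := by rw [ht']; exact Function.update_self _ _ _
  have ht'v : ∀ v, v ≠ h → t' v = t v := by
    intro v hv; rw [ht']; exact Function.update_of_ne hv _ _
  have phase1 : ∀ e, e ≠ h → x e ≤ y e := by
    intro e heh
    by_contra hlt
    push_neg at hlt
    rcases MEX hf hx.1.1 hyopt.1.1 hlt with ⟨g, hge, hgxy, hzfeas, hwfeas⟩ | ⟨hslt, _⟩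
    · have hne_eg : e ≠ g := fun hh => hge hh.symm
      have hmarg := opt_marginal hx hne_eg (by omega) hwfeas
      have h1 : C e (y e + 1) (t e) - C e (y e) (t e)
          ≤ C e (x e) (t e) - C e (x e - 1) (t e) := by
        have hm := reg_mono (hreg e) (t e) (a := y e) (b := x e - 1) (by omega)
        rwa [show x e - 1 + 1 = x e by omega] at hm
      have hkey : C e (y e + 1) (t' e) - C e (y e) (t' e)
          ≤ C g (y g) (t' g) - C g (y g - 1) (t' g) := by
        rw [ht'v e heh]
        by_cases hgh : g = h
        · subst hgh
          rw [ht'h]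
          have h2 : C g (x g + 1) (t g) - C g (x g) (t g)
              ≤ C g (y g) (t g) - C g (y g - 1) (t g) := by
            have hm := reg_mono (hreg g) (t g) (a := x g) (b := y g - 1) (by omega)
            rwa [show y g - 1 + 1 = y g by omega] at hm
          have h3 : C g (y g) (t g) - C g (y g - 1) (t g)
              ≤ C g (y g) (t g + 1) - C g (y g - 1) (t g + 1) := by
            have hm := reg_up (hreg g) (y g - 1) (t g)
            rwa [show y g - 1 + 1 = y g by omega] at hm
          linarith
        · rw [ht'v g hgh]
          have h2 : C g (x g + 1) (t g) - C g (x g) (t g)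
              ≤ C g (y g) (t g) - C g (y g - 1) (t g) := by
            have hm := reg_mono (hreg g) (t g) (a := x g) (b := y g - 1) (by omega)
            rwa [show y g - 1 + 1 = y g by omega] at hm
          linarith
      have hzB : exch y g e ∈ Base f d := exch_mem_base hyopt.1 hge (by omega) hzfeas
      have hcost := cost_exch_le (C := C) (t := t') hge hkey
      have hzopt : IsOptimal f C t' d (exch y g e) :=
        ⟨hzB, fun w' hw' => hcost.trans (hyopt.2 w' hw')⟩
      have hmm1 := hymin _ hzopt
      have hmm2 := l1_exch_lt hge hlt hgxy
      omega
    · omega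
  by_cases hxh : x h ≤ y h
  · have hle : ∀ e, x e ≤ y e := by
      intro e
      by_cases heh : e = h
      · subst heh; exact hxh
      · exact phase1 e heh
    exact ⟨y, hyopt, Or.inl (sum_eq_of_le hle hsum)⟩
  · push_neg at hxh
    by_cases hm1 : y h + 1 = x h
    · obtain ⟨g, hgh, hgy⟩ := eq_exch_chi phase1 hm1 hsum
      exact ⟨y, hyopt, Or.inr ⟨g, hgh, hgy⟩⟩
    · exfalso
      rcases MEX hf hx.1.1 hyopt.1.1 hxh with ⟨g, hge, hgxy, hzfeas, hwfeas⟩ | ⟨hslt, _⟩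
      · have hne_hg : h ≠ g := fun hh => hge hh.symm
        have hmarg := opt_marginal hx hne_hg (by omega) hwfeas
        have hkey : C h (y h + 1) (t' h) - C h (y h) (t' h)
            ≤ C g (y g) (t' g) - C g (y g - 1) (t' g) := by
          rw [ht'h, ht'v g hge]
          have h1 : C h (y h + 1) (t h + 1) - C h (y h) (t h + 1)
              ≤ C h (y h + 2) (t h) - C h (y h + 1) (t h) := reg_cross (hreg h) (y h) (t h)
          have h2 : C h (y h + 2) (t h) - C h (y h + 1) (t h)
              ≤ C h (x h) (t h) - C h (x h - 1) (t h) := by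
            have hm := reg_mono (hreg h) (t h) (a := y h + 1) (b := x h - 1) (by omega)
            rwa [show x h - 1 + 1 = x h by omega] at hm
          have h3 : C g (x g + 1) (t g) - C g (x g) (t g)
              ≤ C g (y g) (t g) - C g (y g - 1) (t g) := by
            have hm := reg_mono (hreg g) (t g) (a := x g) (b := y g - 1) (by omega)
            rwa [show y g - 1 + 1 = y g by omega] at hm
          linarith
        have hzB : exch y g h ∈ Base f d := exch_mem_base hyopt.1 hge (by omega) hzfeas
        have hcost := cost_exch_le (C := C) (t := t') hge hkey
        have hzopt : IsOptimal f C t' d (exch y g h) :=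
          ⟨hzB, fun w' hw' => hcost.trans (hyopt.2 w' hw')⟩
        have hmm1 := hymin _ hzopt
        have hmm2 := l1_exch_lt hge hxh hgxy
        omega
      · omega

lemma stepT_down (hf : IsPolymatroidRank f) (hreg : ∀ e, Regular (C e)) {d : ℕ} {x : E → ℕ}
    {h : E} (hx : IsOptimal f C t d x) (hth : 1 ≤ t h) :
    ∃ x', IsOptimal f C (Function.update t h (t h - 1)) d x' ∧
      (x' = x ∨ ∃ e, e ≠ h ∧ 1 ≤ x e ∧ x' = x - chi e + chi h) := by
  set t' := Function.update t h (t h - 1) with ht'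
  obtain ⟨y, hyopt, hymin⟩ := exists_optimal_minl1 C t' ⟨x, hx.1⟩ x
  have hsum : ∑ v, y v = ∑ v, x v := by rw [hyopt.1.2, hx.1.2]
  have ht'h : t' h = t h - 1 := by rw [ht']; exact Function.update_self _ _ _
  have ht'v : ∀ v, v ≠ h → t' v = t v := by
    intro v hv; rw [ht']; exact Function.update_of_ne hv _ _
  have phase1 : ∀ g, g ≠ h → y g ≤ x g := by
    intro g hgh
    by_contra hlt
    push_neg at hlt
    rcases MEX hf hyopt.1.1 hx.1.1 hlt with ⟨e, heg, hexy, hwfeas, hzfeas⟩ | ⟨hslt, _⟩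
    · have hgne : g ≠ e := fun hh => heg hh.symm
      have hmarg := opt_marginal hx heg (by omega) hwfeas
      have h3 : C g (x g + 1) (t g) - C g (x g) (t g)
          ≤ C g (y g) (t g) - C g (y g - 1) (t g) := by
        have hm := reg_mono (hreg g) (t g) (a := x g) (b := y g - 1) (by omega)
        rwa [show y g - 1 + 1 = y g by omega] at hm
      have hkey : C e (y e + 1) (t' e) - C e (y e) (t' e)
          ≤ C g (y g) (t' g) - C g (y g - 1) (t' g) := by
        rw [ht'v g hgh]
        by_cases heh : e = h
        · subst heh
          rw [ht'h]
          have h1 : C e (y e + 1) (t e - 1) - C e (y e) (t e - 1)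
              ≤ C e (y e + 1) (t e) - C e (y e) (t e) := by
            have hm := reg_up (hreg e) (y e) (t e - 1)
            rwa [show t e - 1 + 1 = t e by omega] at hm
          have h2 : C e (y e + 1) (t e) - C e (y e) (t e)
              ≤ C e (x e) (t e) - C e (x e - 1) (t e) := by
            have hm := reg_mono (hreg e) (t e) (a := y e) (b := x e - 1) (by omega)
            rwa [show x e - 1 + 1 = x e by omega] at hm
          linarith
        · rw [ht'v e heh]
          have h2 : C e (y e + 1) (t e) - C e (y e) (t e)
              ≤ C e (x e) (t e) - C e (x e - 1) (t e) := by
            have hm := reg_mono (hreg e) (t e) (a := y e) (b := x e - 1) (by omega)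
            rwa [show x e - 1 + 1 = x e by omega] at hm
          linarith
      have hzB : exch y g e ∈ Base f d := exch_mem_base hyopt.1 hgne (by omega) hzfeas
      have hcost := cost_exch_le (C := C) (t := t') hgne hkey
      have hzopt : IsOptimal f C t' d (exch y g e) :=
        ⟨hzB, fun w' hw' => hcost.trans (hyopt.2 w' hw')⟩
      have hmm1 := hymin _ hzopt
      have hmm2 := l1_exch_lt hgne hexy hlt
      omega
    · omega
  by_cases hyh : y h ≤ x h
  · have hle : ∀ e, y e ≤ x e := by
      intro e
      by_cases heh : e = h
      · subst heh; exact hyh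
      · exact phase1 e heh
    exact ⟨y, hyopt, Or.inl (sum_eq_of_le hle hsum.symm).symm⟩
  · push_neg at hyh
    by_cases hm1 : x h + 1 = y h
    · obtain ⟨e, heh, hxe, hgy⟩ := eq_exch_chi' phase1 hm1 hsum
      exact ⟨y, hyopt, Or.inr ⟨e, heh, hxe, hgy⟩⟩
    · exfalso
      rcases MEX hf hyopt.1.1 hx.1.1 hyh with ⟨e, heh2, hexy, hwfeas, hzfeas⟩ | ⟨hslt, _⟩
      · have hne_eh : e ≠ h := heh2
        have hmarg := opt_marginal hx hne_eh (by omega) hwfeas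
        have hkey : C e (y e + 1) (t' e) - C e (y e) (t' e)
            ≤ C h (y h) (t' h) - C h (y h - 1) (t' h) := by
          rw [ht'v e hne_eh, ht'h]
          have h1 : C e (y e + 1) (t e) - C e (y e) (t e)
              ≤ C e (x e) (t e) - C e (x e - 1) (t e) := by
            have hm := reg_mono (hreg e) (t e) (a := y e) (b := x e - 1) (by omega)
            rwa [show x e - 1 + 1 = x e by omega] at hm
          have h2 : C h (x h + 1) (t h) - C h (x h) (t h)
              ≤ C h (y h - 1) (t h) - C h (y h - 2) (t h) := by
            have hm := reg_mono (hreg h) (t h) (a := x h) (b := y h - 2) (by omega)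
            rwa [show y h - 2 + 1 = y h - 1 by omega] at hm
          have h3 : C h (y h - 1) (t h) - C h (y h - 2) (t h)
              ≤ C h (y h) (t h - 1) - C h (y h - 1) (t h - 1) := by
            have hm := reg_cross (hreg h) (y h - 2) (t h - 1)
            rwa [show y h - 2 + 1 = y h - 1 by omega, show t h - 1 + 1 = t h by omega,
                 show y h - 2 + 2 = y h by omega] at hm
          linarith
        have hhe : h ≠ e := fun hh => heh2 hh.symm
        have hzB : exch y h e ∈ Base f d := exch_mem_base hyopt.1 hhe (by omega) hzfeas
        have hcost := cost_exch_le (C := C) (t := t') hhe hkey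
        have hzopt : IsOptimal f C t' d (exch y h e) :=
          ⟨hzB, fun w' hw' => hcost.trans (hyopt.2 w' hw')⟩
        have hmm1 := hymin _ hzopt
        have hmm2 := l1_exch_lt hhe hexy hyh
        omega
      · omega

end Steps

section Main
variable {E : Type*} [Fintype E] [DecidableEq E]

lemma base_nonempty_le {f : Finset E → ℕ} {d c : ℕ}
    (hB : (Base f d).Nonempty) (hcd : c ≤ d) : (Base f c).Nonempty := by
  obtain ⟨k, rfl⟩ : ∃ k, d = c + k := ⟨d - c, by omega⟩
  clear hcd
  induction k with
  | zero => simpa using hB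
  | succ k ih =>
    apply ih
    obtain ⟨x, hx⟩ := hB
    have hsum : ∑ v, x v = c + k + 1 := hx.2
    have hexash : ∃ e, x e ≠ 0 := by
      by_contra hc
      push_neg at hc
      have : ∑ v, x v = 0 := Finset.sum_eq_zero (fun v _ => hc v)
      omega
    obtain ⟨e, he⟩ := hexash
    refine ⟨subOne x e, ?_, ?_⟩
    · apply feas_mono hx.1
      intro v
      simp only [subOne]
      split_ifs <;> omega
    · have hs := sum_subOne (by omega : 1 ≤ x e) Finset.univ
      rw [if_pos (Finset.mem_univ e)] at hs
      omega

/-- The elementary step relation of the theorem. -/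
def StepRel (a b : E → ℕ) : Prop :=
  (∃ e g : E, e ≠ g ∧ b = a - chi e + chi g) ∨ (∃ e : E, b = a + chi e) ∨
    (∃ e : E, b = a - chi e) ∨ b = a

lemma prepend_seq {P : (E → ℕ) → Prop} {x x1 : E → ℕ} (hstep : StepRel x x1)
    {k' : ℕ} {seq' : ℕ → (E → ℕ)} (h0 : seq' 0 = x1) (hP : P (seq' k'))
    (hsteps : ∀ l < k', StepRel (seq' l) (seq' (l + 1))) :
    ∃ seq : ℕ → (E → ℕ), seq 0 = x ∧ P (seq (k' + 1)) ∧
      ∀ l < k' + 1, StepRel (seq l) (seq (l + 1)) := by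
  refine ⟨fun l => if l = 0 then x else seq' (l - 1), rfl, ?_, ?_⟩
  · simpa using hP
  · intro l hl
    rcases Nat.eq_zero_or_pos l with rfl | hlpos
    · simpa [h0] using hstep
    · have h1 : l ≠ 0 := by omega
      have h2 : l + 1 ≠ 0 := by omega
      simp only [if_neg h1, if_neg h2]
      have h3 := hsteps (l - 1) (by omega)
      rw [show l - 1 + 1 = l from by omega] at h3
      rw [show l + 1 - 1 = l from by omega]
      exact h3

lemma main_aux (f : Finset E → ℕ) (hf : IsPolymatroidRank f)
    (C : E → ℕ → ℕ → ℝ) (hreg : ∀ e, Regular (C e)) (t' : E → ℕ) (d' : ℕ)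
    (hBd' : (Base f d').Nonempty) :
    ∀ N : ℕ, ∀ t : E → ℕ, ∀ d : ℕ, ∀ x : E → ℕ,
      IsOptimal f C t d x → l1 t t' + ((d : ℤ) - (d' : ℤ)).natAbs ≤ N →
      ∃ (k : ℕ) (seq : ℕ → (E → ℕ)),
        k ≤ l1 t t' + ((d : ℤ) - (d' : ℤ)).natAbs ∧ seq 0 = x ∧
        IsOptimal f C t' d' (seq k) ∧ ∀ l < k, StepRel (seq l) (seq (l + 1)) := by
  intro N
  induction N with
  | zero =>
    intro t d x hx hle
    have h1 : l1 t t' = 0 := by omega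
    have h2 : d = d' := by omega
    have h3 : t = t' := l1_eq_zero h1
    subst h2; subst h3
    exact ⟨0, fun _ => x, Nat.zero_le _, rfl, hx, fun l hl => absurd hl (Nat.not_lt_zero l)⟩
  | succ N ih =>
    intro t d x hx hle
    by_cases hterm : l1 t t' = 0 ∧ d = d'
    · obtain ⟨h1, h2⟩ := hterm
      have h3 : t = t' := l1_eq_zero h1
      subst h2; subst h3
      exact ⟨0, fun _ => x, Nat.zero_le _, rfl, hx, fun l hl => absurd hl (Nat.not_lt_zero l)⟩
    · rcases Nat.lt_trichotomy d d' with hdd | hdd | hdd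
      · -- d < d'
        have hB1 : (Base f (d + 1)).Nonempty := base_nonempty_le hBd' (by omega)
        obtain ⟨g, hx1⟩ := stepD_up hf hreg hx hB1
        have hmeas : l1 t t' + (((d + 1 : ℕ) : ℤ) - (d' : ℤ)).natAbs ≤ N := by omega
        obtain ⟨k', seq', hk', h0', hopt', hsteps'⟩ := ih t (d + 1) (x + chi g) hx1 hmeas
        obtain ⟨seq, hs0, hsP, hssteps⟩ := prepend_seq (P := IsOptimal f C t' d')
          (Or.inr (Or.inl ⟨g, rfl⟩)) h0' hopt' hsteps'
        exact ⟨k' + 1, seq, by omega, hs0, hsP, hssteps⟩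
      · -- d = d', t ≠ t'
        have hl1 : l1 t t' ≠ 0 := fun hz => hterm ⟨hz, hdd⟩
        have hl1' : ∑ e, ((t e : ℤ) - (t' e : ℤ)).natAbs ≠ 0 := hl1
        obtain ⟨h, _, hh⟩ := Finset.exists_ne_zero_of_sum_ne_zero hl1'
        rcases Nat.lt_or_ge (t h) (t' h) with hlt | hge
        · obtain ⟨x1, hx1opt, hx1form⟩ := stepT_up (h := h) hf hreg hx
          have hmeasure : l1 (Function.update t h (t h + 1)) t' + 1 = l1 t t' :=
            l1_update (by omega)
          have hmeas : l1 (Function.update t h (t h + 1)) t'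
              + ((d : ℤ) - (d' : ℤ)).natAbs ≤ N := by omega
          obtain ⟨k', seq', hk', h0', hopt', hsteps'⟩ := ih _ d x1 hx1opt hmeas
          have hstep : StepRel x x1 := by
            rcases hx1form with rfl | ⟨g, hgh, hgy⟩
            · exact Or.inr (Or.inr (Or.inr rfl))
            · exact Or.inl ⟨h, g, Ne.symm hgh, hgy⟩
          obtain ⟨seq, hs0, hsP, hssteps⟩ := prepend_seq (P := IsOptimal f C t' d')
            hstep h0' hopt' hsteps'
          exact ⟨k' + 1, seq, by omega, hs0, hsP, hssteps⟩
        · have hgt : t' h < t h := by omega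
          obtain ⟨x1, hx1opt, hx1form⟩ := stepT_down (h := h) hf hreg hx (by omega)
          have hmeasure : l1 (Function.update t h (t h - 1)) t' + 1 = l1 t t' :=
            l1_update (by omega)
          have hmeas : l1 (Function.update t h (t h - 1)) t'
              + ((d : ℤ) - (d' : ℤ)).natAbs ≤ N := by omega
          obtain ⟨k', seq', hk', h0', hopt', hsteps'⟩ := ih _ d x1 hx1opt hmeas
          have hstep : StepRel x x1 := by
            rcases hx1form with rfl | ⟨e, heh, hxe, hgy⟩
            · exact Or.inr (Or.inr (Or.inr rfl))
            · exact Or.inl ⟨e, h, heh, hgy⟩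
          obtain ⟨seq, hs0, hsP, hssteps⟩ := prepend_seq (P := IsOptimal f C t' d')
            hstep h0' hopt' hsteps'
          exact ⟨k' + 1, seq, by omega, hs0, hsP, hssteps⟩
      · -- d' < d
        have hB1 : (Base f (d - 1)).Nonempty :=
          base_nonempty_le ⟨x, hx.1⟩ (by omega)
        obtain ⟨e, hxe, hx1⟩ := stepD_down hf hreg hx (by omega) hB1
        have hmeas : l1 t t' + (((d - 1 : ℕ) : ℤ) - (d' : ℤ)).natAbs ≤ N := by omega
        obtain ⟨k', seq', hk', h0', hopt', hsteps'⟩ := ih t (d - 1) (x - chi e) hx1 hmeas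
        obtain ⟨seq, hs0, hsP, hssteps⟩ := prepend_seq (P := IsOptimal f C t' d')
          (Or.inr (Or.inr (Or.inl ⟨e, rfl⟩))) h0' hopt' hsteps'
        exact ⟨k' + 1, seq, by omega, hs0, hsP, hssteps⟩

end Main


/-- **Reoptimization by elementary exchange steps.** Let `f` be an integral polymatroid rank
function and all `C_e` nonnegative and regular. For `t, t' ∈ ℕ^E` and `d, d' ∈ ℕ` with
`B_f(d) ≠ ∅ ≠ B_f(d')`, for every optimal solution `x` of `P(t,d)` there exist
`k ≤ ‖t - t'‖ + |d - d'|` and a sequence `x = x⁰, x¹, …, x^k` such that `x^k` is an optimal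
solution of `P(t',d')` and each step is an elementary exchange: shifting one unit between two
elements, adding one unit, removing one unit, or doing nothing. -/
theorem reoptimization_elementary_steps {E : Type*} [Fintype E] [DecidableEq E] [Nonempty E]
    (f : Finset E → ℕ) (hf : IsPolymatroidRank f)
    (C : E → ℕ → ℕ → ℝ) (hC0 : ∀ e x t, 0 ≤ C e x t)
    (hreg : ∀ e, Regular (C e))
    (t t' : E → ℕ) (d d' : ℕ)
    (hBd : (Base f d).Nonempty) (hBd' : (Base f d').Nonempty)
    (x : E → ℕ) (hx : IsOptimal f C t d x) :
    ∃ (k : ℕ) (seq : ℕ → (E → ℕ)),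
      k ≤ l1 t t' + ((d : ℤ) - (d' : ℤ)).natAbs ∧
      seq 0 = x ∧
      IsOptimal f C t' d' (seq k) ∧
      ∀ l < k,
        (∃ e g : E, e ≠ g ∧ seq (l + 1) = seq l - chi e + chi g) ∨
        (∃ e : E, seq (l + 1) = seq l + chi e) ∨
        (∃ e : E, seq (l + 1) = seq l - chi e) ∨
        seq (l + 1) = seq l := by
  obtain ⟨k, seq, hk, h0, hopt, hsteps⟩ := main_aux f hf C hreg t' d' hBd'
    (l1 t t' + ((d : ℤ) - (d' : ℤ)).natAbs) t d x hx le_rfl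
  exact ⟨k, seq, hk, h0, hopt, fun l hl => hsteps l hl⟩
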